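/- For every integer k ≥ 2, the harmonic weighting function f_k satisfies: for any finite sequence x_1,...,x_m of reals in (0,1] with sum at most 1, the sum of f_k(x_i) is at most T_k, where T_k = Σ_{i=1}^{m(k)} 1/t_i + (1/t_{m(k)+1})·(k/(k-1)). -/

import Mathlib

set_option maxHeartbeats 1000000

/-- The sequence from the Harmonic algorithm: `t 1 = 1`, `t (i+1) = t i * (t i + 1)`. -/
def tSeq : ℕ → ℕ
  | 0 => 1
  | 1 => 1
  | (n + 2) => tSeq (n + 1) * (tSeq (n + 1) + 1)

/-- The harmonic weighting function `f_k`: `f_k x = 1/t` when `1/(t+1) < x ≤ 1/t` with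
`t < k` (so `t = ⌊1/x⌋`), and `f_k x = k*x/(k-1)` when `0 < x ≤ 1/k`. -/
noncomputable def fHarm (k : ℕ) (x : ℝ) : ℝ :=
  if x ≤ 1 / k then k * x / ((k : ℝ) - 1) else 1 / (⌊1 / x⌋ : ℝ)

/-- The harmonic constant `T_k = Σ_{i=1}^{m} 1/t_i + (1/t_{m+1}) * (k/(k-1))`,
where `m = m(k)` satisfies `t_m < k ≤ t_{m+1}`. -/
noncomputable def TkVal (k m : ℕ) : ℝ :=
  (∑ i ∈ Finset.Icc 1 m, (1 : ℝ) / (tSeq i : ℝ)) +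
    (1 / (tSeq (m + 1) : ℝ)) * ((k : ℝ) / ((k : ℝ) - 1))

noncomputable def cH (k : ℕ) : ℝ := (k : ℝ) / ((k : ℝ) - 1)

noncomputable def gg (k a : ℕ) : ℝ := 1/(a:ℝ) - cH k / ((a:ℝ)+1)

noncomputable def Gam (k : ℕ) (u : ℕ) : ℝ :=
  if h : 1 ≤ u ∧ u < k then gg k u + Gam k (u*(u+1)) else 0
termination_by k - u
decreasing_by
  have h1 : u + 1 ≤ u * (u+1) := by nlinarith [h.1]
  omega

noncomputable def psiF (k : ℕ) : ℕ → ℝ → ℝ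
  | 0, B => cH k * B
  | (n+1), B => if B ≤ 1/(k:ℝ) then cH k * B
      else 1/(⌊1/B⌋₊ : ℝ) + psiF k n (B - 1/((⌊1/B⌋₊ : ℝ)+1))

section Basic
variable {k : ℕ}

lemma hK1 (hk : 2 ≤ k) : (1:ℝ) ≤ (k:ℝ) - 1 := by
  have : (2:ℝ) ≤ (k:ℝ) := by exact_mod_cast hk
  linarith

lemma hKpos (hk : 2 ≤ k) : (0:ℝ) < (k:ℝ) - 1 := lt_of_lt_of_le one_pos (hK1 hk)

lemma cH_eq (hk : 2 ≤ k) : cH k = 1 + 1/((k:ℝ)-1) := by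
  have := hKpos hk
  rw [cH]
  field_simp
  ring

lemma cH_pos (hk : 2 ≤ k) : 0 < cH k := by
  rw [cH_eq hk]
  have := one_div_pos.2 (hKpos hk)
  linarith

lemma one_lt_cH (hk : 2 ≤ k) : 1 < cH k := by
  rw [cH_eq hk]
  have := hKpos hk
  nlinarith [one_div_pos.2 (hKpos hk)]

lemma gg_eq (hk : 2 ≤ k) {a : ℕ} (ha : 1 ≤ a) :
    gg k a = ((k:ℝ)-1-(a:ℝ))/((((k:ℝ)-1) * a) * ((a:ℝ)+1)) := by
  have h1 : (0:ℝ) < (a:ℝ) := by exact_mod_cast ha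
  have h2 := hKpos hk
  have h3 : (0:ℝ) < (a:ℝ)+1 := by linarith
  rw [gg, cH]
  field_simp
  ring

lemma gg_nonneg (hk : 2 ≤ k) {a : ℕ} (ha : 1 ≤ a) (ha2 : a < k) : 0 ≤ gg k a := by
  rw [gg_eq hk ha]
  have h1 : (0:ℝ) < (a:ℝ) := by exact_mod_cast ha
  have h2 := hKpos hk
  have h4 : (a:ℝ) ≤ (k:ℝ) - 1 := by
    have : (a:ℝ) + 1 ≤ (k:ℝ) := by exact_mod_cast ha2
    linarith
  apply div_nonneg (by linarith)
  positivity

lemma gg_mono (hk : 2 ≤ k) {v u : ℕ} (hv : 1 ≤ v) (hvu : v ≤ u) (hu : u < k) :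
    gg k u ≤ gg k v := by
  have hu1 : 1 ≤ u := le_trans hv hvu
  rw [gg_eq hk hv, gg_eq hk hu1]
  have h2 := hKpos hk
  have hv0 : (0:ℝ) < (v:ℝ) := by exact_mod_cast hv
  have hvu' : (v:ℝ) ≤ (u:ℝ) := by exact_mod_cast hvu
  have hu4 : (u:ℝ) ≤ (k:ℝ) - 1 := by
    have : (u:ℝ) + 1 ≤ (k:ℝ) := by exact_mod_cast hu
    linarith
  apply div_le_div₀ (by linarith) (by linarith) (by positivity)
  have h5 : (0:ℝ) ≤ ((u:ℝ) - v) * ((u:ℝ) + v + 1) := by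
    apply mul_nonneg (by linarith) (by positivity)
  nlinarith [mul_nonneg (le_of_lt h2) h5]

end Basic

lemma Gam_unfold {k u : ℕ} (h1 : 1 ≤ u) (h2 : u < k) :
    Gam k u = gg k u + Gam k (u*(u+1)) := by
  rw [Gam, dif_pos ⟨h1, h2⟩]

lemma Gam_zero {k u : ℕ} (h : k ≤ u) : Gam k u = 0 := by
  rw [Gam, dif_neg (by omega)]

lemma Gam_nonneg {k : ℕ} (hk : 2 ≤ k) (u : ℕ) : 0 ≤ Gam k u := by
  rw [Gam]
  split
  · rename_i h
    exact add_nonneg (gg_nonneg hk h.1 h.2) (Gam_nonneg hk (u*(u+1)))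
  · exact le_refl 0
termination_by k - u
decreasing_by
  rename_i h
  have h1 : u + 1 ≤ u * (u+1) := by nlinarith [h.1]
  omega

lemma Gam_le {k : ℕ} (hk : 2 ≤ k) {u : ℕ} (h1 : 1 ≤ u) (h2 : u < k) :
    Gam k u ≤ ((k:ℝ)-1-(u:ℝ))/((((k:ℝ)-1) * u) * u) := by
  have hU0 : (0:ℝ) < (u:ℝ) := by exact_mod_cast h1
  have hK := hKpos hk
  have hU4 : (u:ℝ) ≤ (k:ℝ) - 1 := by
    have : (u:ℝ) + 1 ≤ (k:ℝ) := by exact_mod_cast h2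
    linarith
  rw [Gam_unfold h1 h2, gg_eq hk h1]
  by_cases hc : u*(u+1) < k
  · have IH := Gam_le hk (u := u*(u+1)) (by nlinarith) hc
    have hcast : ((u*(u+1) : ℕ) : ℝ) = (u:ℝ)*((u:ℝ)+1) := by push_cast; ring
    rw [hcast] at IH
    have hu'4 : (u:ℝ)*((u:ℝ)+1) ≤ (k:ℝ) - 1 := by
      have : ((u*(u+1):ℕ):ℝ) + 1 ≤ (k:ℝ) := by exact_mod_cast hc
      rw [hcast] at this; linarith
    have e2' : ((k:ℝ)-1 - (u:ℝ)*((u:ℝ)+1)) * (u:ℝ) ≤ ((k:ℝ)-1-(u:ℝ)) * ((u:ℝ)*((u:ℝ)+1)) := by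
      nlinarith [mul_nonneg (mul_nonneg (by linarith : (0:ℝ) ≤ (k:ℝ)-1) hU0.le) hU0.le]
    have e2 : ((k:ℝ)-1-(u:ℝ)*((u:ℝ)+1))/((((k:ℝ)-1) * ((u:ℝ)*((u:ℝ)+1))) * ((u:ℝ)*((u:ℝ)+1)))
        ≤ ((k:ℝ)-1-(u:ℝ))/(((((k:ℝ)-1) * u) * u) * ((u:ℝ)+1)) := by
      rw [div_le_div_iff₀ (by positivity) (by positivity)]
      nlinarith [mul_le_mul_of_nonneg_left e2'
        (show (0:ℝ) ≤ ((k:ℝ)-1)*((k:ℝ)-1)*(u:ℝ)*((u:ℝ)+1) by positivity)]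
    have e1 : ((k:ℝ)-1-(u:ℝ))/((((k:ℝ)-1) * u) * ((u:ℝ)+1))
        + ((k:ℝ)-1-(u:ℝ))/(((((k:ℝ)-1) * u) * u) * ((u:ℝ)+1))
        = ((k:ℝ)-1-(u:ℝ))/((((k:ℝ)-1) * u) * u) := by
      field_simp
    calc ((k:ℝ)-1-(u:ℝ))/((((k:ℝ)-1) * u) * ((u:ℝ)+1)) + Gam k (u*(u+1))
        ≤ ((k:ℝ)-1-(u:ℝ))/((((k:ℝ)-1) * u) * ((u:ℝ)+1))
          + ((k:ℝ)-1-(u:ℝ))/(((((k:ℝ)-1) * u) * u) * ((u:ℝ)+1)) := by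
          have := le_trans IH e2
          linarith
      _ = ((k:ℝ)-1-(u:ℝ))/((((k:ℝ)-1) * u) * u) := e1
  · rw [Gam_zero (by omega), add_zero]
    apply div_le_div₀ (by linarith) (le_refl _) (by positivity)
    nlinarith
termination_by k - u
decreasing_by
  have h1' : u + 1 ≤ u * (u+1) := by nlinarith
  omega

lemma Gam_mono {k : ℕ} (hk : 2 ≤ k) {v u : ℕ} (hv : 1 ≤ v) (hvu : v ≤ u) :
    Gam k u ≤ Gam k v := by
  by_cases hvk : v < k
  · by_cases huk : u < k
    · rcases eq_or_lt_of_le hvu with rfl | hlt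
      · exact le_refl _
      · rw [Gam_unfold hv hvk]
        by_cases hbig : v*(v+1) ≤ u
        · have : Gam k u ≤ Gam k (v*(v+1)) := Gam_mono hk (by nlinarith) hbig
          have hg := gg_nonneg hk hv hvk
          linarith
        · rw [Gam_unfold (le_trans hv hvu) huk]
          have hggle := gg_mono hk hv hvu huk
          have : Gam k (u*(u+1)) ≤ Gam k (v*(v+1)) := by
            apply Gam_mono hk (by nlinarith)
            exact Nat.mul_le_mul hvu (by omega)
          linarith
    · rw [Gam_zero (by omega)]
      exact Gam_nonneg hk v
  · rw [Gam_zero (by omega), Gam_zero (by omega)]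
termination_by k - v
decreasing_by
  · have : v + 1 ≤ v * (v+1) := by nlinarith
    omega
  · have : v + 1 ≤ v * (v+1) := by nlinarith
    omega

lemma GamI1 {k : ℕ} (hk : 2 ≤ k) {t : ℕ} (h1 : 1 ≤ t) (h2 : t < k) :
    Gam k (t+1) ≤ gg k t := by
  have hT0 : (0:ℝ) < (t:ℝ) := by exact_mod_cast h1
  have hK := hKpos hk
  have hT4 : (t:ℝ) ≤ (k:ℝ) - 1 := by
    have : (t:ℝ) + 1 ≤ (k:ℝ) := by exact_mod_cast h2
    linarith
  by_cases hc : t+1 < k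
  · have := Gam_le hk (u := t+1) (by omega) hc
    have hcast : ((t+1 : ℕ) : ℝ) = (t:ℝ)+1 := by push_cast; ring
    rw [hcast] at this
    rw [gg_eq hk h1]
    refine le_trans this ?_
    rw [div_le_div_iff₀ (by positivity) (by positivity)]
    nlinarith [mul_pos hK hT0]
  · rw [Gam_zero (by omega)]
    exact gg_nonneg hk h1 h2

section Floor
variable {B : ℝ}

lemma fl_one_le (hB0 : 0 < B) (hB1 : B ≤ 1) : 1 ≤ ⌊1/B⌋₊ := by
  apply Nat.le_floor
  rw [Nat.cast_one, le_div_iff₀ hB0]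
  linarith

lemma fl_le_inv (hB0 : 0 < B) : (⌊1/B⌋₊ : ℝ) ≤ 1/B := Nat.floor_le (by positivity)

lemma B_le_inv_fl (hB0 : 0 < B) (hB1 : B ≤ 1) : B ≤ 1/(⌊1/B⌋₊:ℝ) := by
  have h1 := fl_le_inv hB0
  have h2 : (0:ℝ) < (⌊1/B⌋₊:ℝ) := by
    have := fl_one_le hB0 hB1
    exact_mod_cast this
  rw [le_div_iff₀ h2]
  calc B * (⌊1/B⌋₊:ℝ) ≤ B * (1/B) := by
        apply mul_le_mul_of_nonneg_left h1 hB0.le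
    _ = 1 := by field_simp

lemma inv_fl1_lt (hB0 : 0 < B) : 1/((⌊1/B⌋₊:ℝ)+1) < B := by
  have h1 : 1/B < (⌊1/B⌋₊:ℝ) + 1 := Nat.lt_floor_add_one (1/B)
  rw [div_lt_iff₀ (by positivity)]
  rw [div_lt_iff₀ hB0] at h1
  linarith

lemma fl_lt_k {k : ℕ} (hk : 2 ≤ k) (hB0 : 0 < B) (hBk : 1/(k:ℝ) < B) : ⌊1/B⌋₊ < k := by
  have hk0 : (0:ℝ) < (k:ℝ) := by positivity
  rw [div_lt_iff₀ hk0] at hBk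
  have h2 : 1/B < (k:ℝ) := by
    rw [div_lt_iff₀ hB0]
    linarith [mul_comm B (k:ℝ)]
  have := (Nat.floor_lt (by positivity : (0:ℝ) ≤ 1/B)).2 h2
  exact this

lemma k_le_fl {k : ℕ} (hk : 2 ≤ k) (hB0 : 0 < B) (hBk : B ≤ 1/(k:ℝ)) : k ≤ ⌊1/B⌋₊ := by
  apply Nat.le_floor
  have hk0 : (0:ℝ) < (k:ℝ) := by positivity
  rw [le_div_iff₀ hB0]
  rw [le_div_iff₀ hk0] at hBk
  linarith [mul_comm B (k:ℝ)]

end Floor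

lemma psi_small {k : ℕ} (n : ℕ) {B : ℝ} (hB : B ≤ 1/(k:ℝ)) :
    psiF k n B = cH k * B := by
  cases n with
  | zero => rfl
  | succ n => simp only [psiF]; rw [if_pos hB]

lemma psi_unfold {k n : ℕ} {B : ℝ} (hB : ¬ B ≤ 1/(k:ℝ)) :
    psiF k (n+1) B = 1/(⌊1/B⌋₊:ℝ) + psiF k n (B - 1/((⌊1/B⌋₊:ℝ)+1)) := by
  simp only [psiF]; rw [if_neg hB]

lemma psi_ge {k : ℕ} (hk : 2 ≤ k) :
    ∀ n, ∀ B : ℝ, 0 ≤ B → B ≤ 1 → cH k * B ≤ psiF k n B := by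
  intro n
  induction n with
  | zero => intro B _ _; exact le_of_eq rfl
  | succ n IH =>
    intro B h0 h1
    by_cases hB : B ≤ 1/(k:ℝ)
    · rw [psi_small _ hB]
    · rw [psi_unfold hB]
      have hk0 : (0:ℝ) < (k:ℝ) := by positivity
      have hB0 : 0 < B := lt_trans (by positivity) (not_le.1 hB)
      set t := ⌊1/B⌋₊ with ht
      have ht1 : 1 ≤ t := fl_one_le hB0 h1
      have htk : t < k := fl_lt_k hk hB0 (not_le.1 hB)
      have hT0 : (0:ℝ) < (t:ℝ) := by exact_mod_cast ht1
      have hT4 : (t:ℝ) ≤ (k:ℝ) - 1 := by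
        have : (t:ℝ) + 1 ≤ (k:ℝ) := by exact_mod_cast htk
        linarith
      have hB' : 0 < B - 1/((t:ℝ)+1) := by
        have : 1/((t:ℝ)+1) < B := inv_fl1_lt hB0
        linarith
      have IH' := IH (B - 1/((t:ℝ)+1)) hB'.le
        (by linarith [one_div_pos.2 (show (0:ℝ) < (t:ℝ)+1 by linarith)])
      have key : cH k * (1/((t:ℝ)+1)) ≤ 1/(t:ℝ) := by
        rw [cH, div_mul_eq_mul_div, mul_one_div, div_div]
        rw [div_le_div_iff₀ (by nlinarith [hKpos hk]) hT0]
        nlinarith [hKpos hk]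
      have expand : cH k * B
          = cH k * (B - 1/((t:ℝ)+1)) + cH k * (1/((t:ℝ)+1)) := by ring
      linarith

lemma psi_le {k : ℕ} (hk : 2 ≤ k) :
    ∀ n, ∀ B : ℝ, 0 < B → B ≤ 1 → psiF k n B ≤ cH k * B + Gam k ⌊1/B⌋₊ := by
  intro n
  induction n with
  | zero =>
    intro B h0 h1
    simpa [psiF] using Gam_nonneg hk ⌊1/B⌋₊
  | succ n IH =>
    intro B h0 h1
    by_cases hB : B ≤ 1/(k:ℝ)
    · rw [psi_small _ hB]
      simpa using Gam_nonneg hk ⌊1/B⌋₊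
    · rw [psi_unfold hB]
      have hk0 : (0:ℝ) < (k:ℝ) := by positivity
      have hB0 : 0 < B := lt_trans (by positivity) (not_le.1 hB)
      set t := ⌊1/B⌋₊ with ht
      have ht1 : 1 ≤ t := fl_one_le hB0 h1
      have htk : t < k := fl_lt_k hk hB0 (not_le.1 hB)
      have hT0 : (0:ℝ) < (t:ℝ) := by exact_mod_cast ht1
      have hBle : B ≤ 1/(t:ℝ) := B_le_inv_fl hB0 h1
      have hB' : 0 < B - 1/((t:ℝ)+1) := by
        have : 1/((t:ℝ)+1) < B := inv_fl1_lt hB0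
        linarith
      have hB'1 : B - 1/((t:ℝ)+1) ≤ 1 := by
        have : (0:ℝ) < 1/((t:ℝ)+1) := by positivity
        linarith
      have IH' := IH (B - 1/((t:ℝ)+1)) hB' hB'1
      have hflb : t*(t+1) ≤ ⌊1/(B - 1/((t:ℝ)+1))⌋₊ := by
        apply Nat.le_floor
        have hsmall : B - 1/((t:ℝ)+1) ≤ 1/((t:ℝ)*((t:ℝ)+1)) := by
          have e : 1/(t:ℝ) - 1/((t:ℝ)+1) = 1/((t:ℝ)*((t:ℝ)+1)) := by
            field_simp
            ring
          linarith
        rw [le_div_iff₀ hB']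
        push_cast
        rw [le_div_iff₀ (by positivity : (0:ℝ) < (t:ℝ)*((t:ℝ)+1))] at hsmall
        nlinarith
      have hmono : Gam k ⌊1/(B - 1/((t:ℝ)+1))⌋₊ ≤ Gam k (t*(t+1)) :=
        Gam_mono hk (by nlinarith) hflb
      have hunf : Gam k t = gg k t + Gam k (t*(t+1)) := Gam_unfold ht1 htk
      have e2 : 1/(t:ℝ) + cH k * (B - 1/((t:ℝ)+1)) = cH k * B + gg k t := by
        rw [gg]; ring
      linarith

lemma psi_M {k : ℕ} (hk : 2 ≤ k) :
    ∀ n, ∀ B B' : ℝ, 0 ≤ B' → B' ≤ B → B ≤ 1 →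
    psiF k n B' + cH k * (B - B') ≤ psiF k n B := by
  intro n
  induction n with
  | zero => intro B B' _ _ _; exact le_of_eq (by simp [psiF]; ring)
  | succ n IH =>
    intro B B' h0 hBB' h1
    have hk0 : (0:ℝ) < (k:ℝ) := by positivity
    by_cases hB : B ≤ 1/(k:ℝ)
    · rw [psi_small _ hB, psi_small _ (le_trans hBB' hB)]
      exact le_of_eq (by ring)
    · have hB0 : 0 < B := lt_trans (by positivity) (not_le.1 hB)
      by_cases hB' : B' ≤ 1/(k:ℝ)
      · rw [psi_small _ hB']
        have := psi_ge hk (n+1) B hB0.le h1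
        linarith
      · have hB'0 : 0 < B' := lt_trans (by positivity) (not_le.1 hB')
        have hB'1 : B' ≤ 1 := le_trans hBB' h1
        set t := ⌊1/B⌋₊ with ht
        set t' := ⌊1/B'⌋₊ with ht'
        have htt' : t ≤ t' := by
          apply Nat.floor_mono
          exact one_div_le_one_div_of_le hB'0 hBB'
        have ht1 : 1 ≤ t := fl_one_le hB0 h1
        have htk : t < k := fl_lt_k hk hB0 (not_le.1 hB)
        have hT0 : (0:ℝ) < (t:ℝ) := by exact_mod_cast ht1
        have hRB : psiF k (n+1) B = 1/(t:ℝ) + psiF k n (B - 1/((t:ℝ)+1)) :=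
          psi_unfold hB
        rcases eq_or_lt_of_le htt' with heq | hlt
        · -- same piece
          have hRB' : psiF k (n+1) B' = 1/(t:ℝ) + psiF k n (B' - 1/((t:ℝ)+1)) := by
            rw [psi_unfold hB', ← ht', ← heq]
          rw [hRB, hRB']
          have hB'gt : 1/((t:ℝ)+1) < B' := by
            have : 1/((t':ℝ)+1) < B' := inv_fl1_lt hB'0
            rw [← heq] at this
            exact this
          have := IH (B - 1/((t:ℝ)+1)) (B' - 1/((t:ℝ)+1)) (by linarith)
            (by linarith) (by
              have : (0:ℝ) < 1/((t:ℝ)+1) := by positivity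
              linarith)
          have e : cH k * (B - 1/((t:ℝ)+1) - (B' - 1/((t:ℝ)+1))) = cH k * (B - B') := by
            ring
          rw [e] at this
          linarith
        · -- lower piece
          have hup : psiF k (n+1) B' ≤ cH k * B' + Gam k t' := psi_le hk (n+1) B' hB'0 hB'1
          have h2 : Gam k t' ≤ Gam k (t+1) := Gam_mono hk (by omega) hlt
          have h3 : Gam k (t+1) ≤ gg k t := GamI1 hk ht1 htk
          rw [hRB]
          have hB'' : 0 < B - 1/((t:ℝ)+1) := by
            have : 1/((t:ℝ)+1) < B := inv_fl1_lt hB0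
            linarith
          have hlow := psi_ge hk n (B - 1/((t:ℝ)+1)) hB''.le (by
            have : (0:ℝ) < 1/((t:ℝ)+1) := by positivity
            linarith)
          have e : cH k * B' + gg k t + cH k * (B - B')
              = 1/(t:ℝ) + cH k * (B - 1/((t:ℝ)+1)) := by
            rw [gg]; ring
          linarith

lemma psi_stab {k : ℕ} (hk : 2 ≤ k) :
    ∀ n, ∀ B : ℝ, 0 < B → B ≤ 1 → k ≤ n + ⌊1/B⌋₊ →
    psiF k n B = psiF k (n+1) B := by
  intro n
  induction n with
  | zero =>
    intro B h0 h1 hle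
    have hle' : k ≤ ⌊1/B⌋₊ := by omega
    have hB : B ≤ 1/(k:ℝ) := by
      have h2 : (k:ℝ) ≤ (⌊1/B⌋₊:ℝ) := by exact_mod_cast hle'
      have h3 := fl_le_inv h0
      have hk0 : (0:ℝ) < (k:ℝ) := by positivity
      rw [le_div_iff₀ hk0]
      rw [le_div_iff₀ h0] at h3
      nlinarith
    rw [psi_small _ hB, psi_small _ hB]
  | succ n IH =>
    intro B h0 h1 hle
    by_cases hB : B ≤ 1/(k:ℝ)
    · rw [psi_small _ hB, psi_small _ hB]
    · rw [psi_unfold hB, psi_unfold (n := n+1) hB]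
      have hk0 : (0:ℝ) < (k:ℝ) := by positivity
      have hB0 : 0 < B := lt_trans (by positivity) (not_le.1 hB)
      set t := ⌊1/B⌋₊ with ht
      have ht1 : 1 ≤ t := fl_one_le hB0 h1
      have hB' : 0 < B - 1/((t:ℝ)+1) := by
        have : 1/((t:ℝ)+1) < B := inv_fl1_lt hB0
        linarith
      have hB'1 : B - 1/((t:ℝ)+1) ≤ 1 := by
        have : (0:ℝ) < 1/((t:ℝ)+1) := by positivity
        linarith
      have hBle : B ≤ 1/(t:ℝ) := B_le_inv_fl hB0 h1
      have hT0 : (0:ℝ) < (t:ℝ) := by exact_mod_cast ht1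
      have hflb : t*(t+1) ≤ ⌊1/(B - 1/((t:ℝ)+1))⌋₊ := by
        apply Nat.le_floor
        have hsmall : B - 1/((t:ℝ)+1) ≤ 1/((t:ℝ)*((t:ℝ)+1)) := by
          have e : 1/(t:ℝ) - 1/((t:ℝ)+1) = 1/((t:ℝ)*((t:ℝ)+1)) := by
            field_simp
            ring
          linarith
        rw [le_div_iff₀ hB']
        push_cast
        rw [le_div_iff₀ (by positivity : (0:ℝ) < (t:ℝ)*((t:ℝ)+1))] at hsmall
        nlinarith
      rw [IH (B - 1/((t:ℝ)+1)) hB' hB'1 (by nlinarith [hflb, ht1])]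




lemma deg4 (T D : ℝ) (hT : 3 ≤ T) (hD : 1 ≤ D) (h1 : 2*D+1 ≤ T*T) :
    (T+D)*(T+1)*(D+1)^2 ≤ ((T*T+T*D+T)-2*D)*D*(2*T+D+1) := by
  nlinarith [mul_nonneg (mul_nonneg (sub_nonneg.2 h1) (by linarith : (0:ℝ) ≤ D)) (by linarith : (0:ℝ) ≤ D),
             mul_nonneg (mul_nonneg (sub_nonneg.2 h1) (by linarith : (0:ℝ) ≤ T)) (by linarith : (0:ℝ) ≤ D),
             mul_nonneg (mul_nonneg (sub_nonneg.2 hT) (by linarith : (0:ℝ) ≤ T)) (by linarith : (0:ℝ) ≤ D),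
             mul_nonneg (mul_nonneg (sub_nonneg.2 hD) (by linarith : (0:ℝ) ≤ D)) (by linarith : (0:ℝ) ≤ D),
             mul_nonneg (sub_nonneg.2 h1) (by linarith : (0:ℝ) ≤ D),
             mul_nonneg (sub_nonneg.2 hT) (by linarith : (0:ℝ) ≤ D)]

lemma starA_realA (T D S : ℝ) (hT : 3 ≤ T) (hD : 1 ≤ D) (hc : 2*D+1 ≤ T*T)
    (hS : 0 ≤ S) (hSD : T*T+T*D+T-D ≤ S*(D+1)) :
    T*(T+D)*(T+1)*(T+D+1) ≤ S*S*D*(2*T+D+1) := by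
  have hPD : 0 ≤ T*T+T*D+T - D := by nlinarith
  have hsq : (T*T+T*D+T - D)^2 ≤ (S*(D+1))^2 := by
    apply sq_le_sq' (by nlinarith) hSD
  have hsq2 : ((T*T+T*D+T)-2*D)*(T*T+T*D+T) ≤ (T*T+T*D+T-D)^2 := by nlinarith [sq_nonneg D]
  have hdeg4 := deg4 T D hT hD hc
  have hP0 : (0:ℝ) ≤ T*T+T*D+T := by nlinarith
  have hDen : (0:ℝ) < (D+1)^2 := by positivity
  rw [← mul_le_mul_iff_of_pos_right hDen]
  calc T*(T+D)*(T+1)*(T+D+1) * (D+1)^2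
      = (T*T+T*D+T) * ((T+D)*(T+1)*(D+1)^2) := by ring
    _ ≤ (T*T+T*D+T) * (((T*T+T*D+T)-2*D)*D*(2*T+D+1)) :=
        mul_le_mul_of_nonneg_left hdeg4 hP0
    _ = (((T*T+T*D+T)-2*D)*(T*T+T*D+T)) * (D*(2*T+D+1)) := by ring
    _ ≤ (T*T+T*D+T-D)^2 * (D*(2*T+D+1)) :=
        mul_le_mul_of_nonneg_right hsq2 (by nlinarith)
    _ ≤ (S*(D+1))^2 * (D*(2*T+D+1)) :=
        mul_le_mul_of_nonneg_right hsq (by nlinarith)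
    _ = S*S*D*(2*T+D+1) * (D+1)^2 := by ring

lemma starA_realC (T D S : ℝ) (hT : 1 ≤ T) (hD : 1 ≤ D) (hS : T+1 ≤ S)
    (hkey : T*(T+D)*(T+D+1) ≤ (T+1)*D*(2*T+D+1)) :
    T*(T+D)*(T+1)*(T+D+1) ≤ S*S*D*(2*T+D+1) := by
  calc T*(T+D)*(T+1)*(T+D+1) = (T+1)*(T*(T+D)*(T+D+1)) := by ring
    _ ≤ (T+1)*((T+1)*D*(2*T+D+1)) := mul_le_mul_of_nonneg_left hkey (by linarith)
    _ = (T+1)*(T+1)*(D*(2*T+D+1)) := by ring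
    _ ≤ S*S*(D*(2*T+D+1)) := by
        apply mul_le_mul_of_nonneg_right _ (by nlinarith)
        nlinarith
    _ = S*S*D*(2*T+D+1) := by ring

lemma starA {t d s : ℕ} (ht : 1 ≤ t) (hd : 1 ≤ d) (hs : t+1 ≤ s)
    (hcon : t*(t+d+1)+1 ≤ (s+1)*(d+1)) :
    t*(t+d)*(t+1)*(t+d+1) ≤ s*s*d*(2*t+d+1) := by
  have hT : (1:ℝ) ≤ (t:ℝ) := by exact_mod_cast ht
  have hD : (1:ℝ) ≤ (d:ℝ) := by exact_mod_cast hd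
  have hS : (t:ℝ)+1 ≤ (s:ℝ) := by exact_mod_cast hs
  have hcon' : (t:ℝ)*((t:ℝ)+(d:ℝ)+1)+1 ≤ ((s:ℝ)+1)*((d:ℝ)+1) := by exact_mod_cast hcon
  have goal' : (t:ℝ)*((t:ℝ)+(d:ℝ))*((t:ℝ)+1)*((t:ℝ)+(d:ℝ)+1) ≤ (s:ℝ)*(s:ℝ)*(d:ℝ)*(2*(t:ℝ)+(d:ℝ)+1) →
      t*(t+d)*(t+1)*(t+d+1) ≤ s*s*d*(2*t+d+1) := by
    intro h; exact_mod_cast h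
  apply goal'
  by_cases hcase : 2*d+1 ≤ t*t
  · have ht2 : 2 ≤ t := by nlinarith
    by_cases ht3 : 3 ≤ t
    · apply starA_realA _ _ _ (by exact_mod_cast ht3) hD (by exact_mod_cast hcase)
        (by linarith) (by nlinarith)
    · have ht2' : t = 2 := by omega
      have hd1 : d = 1 := by subst ht2'; omega
      subst ht2'; subst hd1
      have hs4 : 4 ≤ s := by omega
      have hS4 : (4:ℝ) ≤ (s:ℝ) := by exact_mod_cast hs4
      norm_num
      nlinarith
  · have hc : t*t ≤ 2*d := by omega
    have hc' : (t:ℝ)*(t:ℝ) ≤ 2*(d:ℝ) := by exact_mod_cast hc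
    apply starA_realC _ _ _ hT hD hS
    rcases Nat.lt_or_ge t 2 with h1 | h2
    · have h1' : t = 1 := by omega
      subst h1'
      norm_num
      nlinarith
    · rcases Nat.lt_or_ge t 3 with h3 | h4
      · have h3' : t = 2 := by omega
        subst h3'
        have hd2 : 2 ≤ d := by omega
        have hD2 : (2:ℝ) ≤ (d:ℝ) := by exact_mod_cast hd2
        norm_num
        nlinarith
      · have hT3 : (3:ℝ) ≤ (t:ℝ) := by exact_mod_cast h4
        nlinarith [mul_nonneg (sub_nonneg.2 hc') (by linarith : (0:ℝ) ≤ (t:ℝ)),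
                   mul_nonneg (mul_nonneg (sub_nonneg.2 hD) (by linarith : (0:ℝ) ≤ (d:ℝ))) (by linarith : (0:ℝ) ≤ (d:ℝ))]

lemma I2core {k t a s : ℕ} (hk : 2 ≤ k) (ht : 1 ≤ t) (hta : t < a) (hak : a < k)
    (hs : t+1 ≤ s) (hsk : s < k) (hcon : t*(a+1)+1 ≤ (s+1)*(a+1-t)) :
    ((k:ℝ)-1-(s:ℝ))/((((k:ℝ)-1) * s) * s) ≤ gg k t - gg k a := by
  have hK := hKpos hk
  have ha1 : 1 ≤ a := by omega
  have hT0 : (0:ℝ) < (t:ℝ) := by exact_mod_cast ht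
  have hA0 : (0:ℝ) < (a:ℝ) := by exact_mod_cast ha1
  have hS0 : (0:ℝ) < (s:ℝ) := by
    have : (0:ℕ) < s := by omega
    exact_mod_cast this
  have hTA : (t:ℝ) < (a:ℝ) := by exact_mod_cast hta
  have hSK : (s:ℝ) ≤ (k:ℝ) - 1 := by
    have : (s:ℝ) + 1 ≤ (k:ℝ) := by exact_mod_cast hsk
    linarith
  have hTS : (t:ℝ) + 1 ≤ (s:ℝ) := by exact_mod_cast hs
  -- integer starA specialized
  have hstarN : t*a*(t+1)*(a+1) ≤ s*s*(a-t)*(t+a+1) := by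
    have e2 : (a-t)+1 = a+1-t := by omega
    have h := starA ht (show 1 ≤ a-t by omega) hs
      (by rw [show t+(a-t)+1 = a+1 by omega, e2]; exact hcon)
    rw [show t+(a-t) = a by omega, show 2*t+(a-t)+1 = t+a+1 by omega] at h
    exact h
  have hAT : ((a-t:ℕ):ℝ) = (a:ℝ)-(t:ℝ) := by
    push_cast [Nat.cast_sub (le_of_lt hta)]
    ring
  have hstar : (t:ℝ)*(a:ℝ)*((t:ℝ)+1)*((a:ℝ)+1)
      ≤ (s:ℝ)*(s:ℝ)*((a:ℝ)-(t:ℝ))*((t:ℝ)+(a:ℝ)+1) := by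
    rw [← hAT]
    exact_mod_cast hstarN
  rw [gg_eq hk ht, gg_eq hk ha1]
  rw [div_sub_div _ _ (by positivity) (by positivity), div_le_div_iff₀ (by positivity) (by positivity)]
  have E1 : (0:ℝ) ≤ ((k:ℝ)-1-(s:ℝ)) * ((s:ℝ)*(s:ℝ)*((a:ℝ)-(t:ℝ))*((t:ℝ)+(a:ℝ)+1)
      - (t:ℝ)*(a:ℝ)*((t:ℝ)+1)*((a:ℝ)+1)) :=
    mul_nonneg (by linarith) (by linarith)
  have E2 : (0:ℝ) ≤ ((s:ℝ)*(s:ℝ)*((a:ℝ)-(t:ℝ))) * ((s:ℝ)*((t:ℝ)+(a:ℝ)+1) - (t:ℝ)*(a:ℝ)) := by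
    apply mul_nonneg (by nlinarith) (by nlinarith)
  nlinarith [mul_nonneg (mul_nonneg hK.le hK.le) E1, mul_nonneg (mul_nonneg hK.le hK.le) E2]

lemma Psi_unfold {k : ℕ} (hk : 2 ≤ k) {B : ℝ} (h0 : 0 < B) (h1 : B ≤ 1)
    (hB : ¬ B ≤ 1/(k:ℝ)) :
    psiF k k B = 1/(⌊1/B⌋₊:ℝ) + psiF k k (B - 1/((⌊1/B⌋₊:ℝ)+1)) := by
  calc psiF k k B = psiF k (k+1) B := psi_stab hk k B h0 h1 (by omega)
    _ = 1/(⌊1/B⌋₊:ℝ) + psiF k k (B - 1/((⌊1/B⌋₊:ℝ)+1)) := psi_unfold hB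

lemma fHarm_small {k : ℕ} {x : ℝ} (h : x ≤ 1/(k:ℝ)) : fHarm k x = cH k * x := by
  rw [fHarm, if_pos h, cH]
  ring

lemma fHarm_big {k : ℕ} {x : ℝ} (hx0 : 0 < x) (h : ¬ x ≤ 1/(k:ℝ)) :
    fHarm k x = 1/((⌊1/x⌋₊:ℕ):ℝ) := by
  rw [fHarm, if_neg h]
  congr 1
  have h0 : (0:ℝ) ≤ 1/x := by positivity
  have e : ((⌊1/x⌋₊ : ℕ) : ℤ) = ⌊1/x⌋ := by
    rw [← Int.floor_toNat]
    exact Int.toNat_of_nonneg (Int.floor_nonneg.2 h0)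
  exact_mod_cast congrArg (fun z : ℤ => (z:ℝ)) e.symm

lemma step {k : ℕ} (hk : 2 ≤ k) :
    ∀ d : ℕ, ∀ B x : ℝ, 0 < x → x ≤ B → B ≤ 1 → k ≤ d + ⌊1/B⌋₊ →
    fHarm k x + psiF k k (B - x) ≤ psiF k k B := by
  intro d
  induction d with
  | zero =>
    intro B x hx0 hxB hB1 hle
    have hB0 : 0 < B := lt_of_lt_of_le hx0 hxB
    have hle' : k ≤ ⌊1/B⌋₊ := by omega
    have hB : B ≤ 1/(k:ℝ) := by
      have h2 : (k:ℝ) ≤ (⌊1/B⌋₊:ℝ) := by exact_mod_cast hle'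
      have h3 := fl_le_inv hB0
      have hk0 : (0:ℝ) < (k:ℝ) := by positivity
      rw [le_div_iff₀ hk0]
      rw [le_div_iff₀ hB0] at h3
      nlinarith
    rw [fHarm_small (by linarith), psi_small _ (by linarith), psi_small _ hB]
    exact le_of_eq (by ring)
  | succ d IH =>
    intro B x hx0 hxB hB1 hle
    have hB0 : 0 < B := lt_of_lt_of_le hx0 hxB
    have hk0 : (0:ℝ) < (k:ℝ) := by positivity
    by_cases hBk : B ≤ 1/(k:ℝ)
    · rw [fHarm_small (by linarith), psi_small _ (by linarith), psi_small _ hBk]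
      exact le_of_eq (by ring)
    · set t := ⌊1/B⌋₊ with ht
      have ht1 : 1 ≤ t := fl_one_le hB0 hB1
      have htk : t < k := fl_lt_k hk hB0 (not_le.1 hBk)
      have hT0 : (0:ℝ) < (t:ℝ) := by exact_mod_cast ht1
      have hBle : B ≤ 1/(t:ℝ) := B_le_inv_fl hB0 hB1
      have hBgt : 1/((t:ℝ)+1) < B := inv_fl1_lt hB0
      have hTk : (t:ℝ) + 1 ≤ (k:ℝ) := by exact_mod_cast htk
      by_cases hxk : x ≤ 1/(k:ℝ)
      · rw [fHarm_small hxk]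
        have hM := psi_M hk k B (B-x) (by linarith) (by linarith) hB1
        have e : cH k * (B-(B-x)) = cH k * x := by ring
        rw [e] at hM
        linarith
      · -- big item
        have hx1 : x ≤ 1 := le_trans hxB hB1
        set a := ⌊1/x⌋₊ with ha
        have ha1 : 1 ≤ a := fl_one_le hx0 hx1
        have hak : a < k := fl_lt_k hk hx0 (not_le.1 hxk)
        have hA0 : (0:ℝ) < (a:ℝ) := by exact_mod_cast ha1
        have hf : fHarm k x = 1/(a:ℝ) := fHarm_big hx0 hxk
        have hta : t ≤ a := Nat.floor_mono (one_div_le_one_div_of_le hx0 hxB)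
        have hxa : 1/((a:ℝ)+1) < x := inv_fl1_lt hx0
        have hxA : x ≤ 1/(a:ℝ) := B_le_inv_fl hx0 hx1
        rw [Psi_unfold hk hB0 hB1 hBk, ← ht]
        by_cases hxh : 1/((t:ℝ)+1) < x
        · -- a = t : mono
          have h1 : 1/x < (t:ℝ)+1 := by
            rw [div_lt_iff₀ hx0]
            rw [div_lt_iff₀ (by positivity : (0:ℝ) < (t:ℝ)+1)] at hxh
            linarith
          have hat : a < t+1 := by
            have := (Nat.floor_lt (by positivity : (0:ℝ) ≤ 1/x)).2
              (by exact_mod_cast h1 : 1/x < ((t+1:ℕ):ℝ))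
            exact_mod_cast this
          have haet : a = t := by omega
          rw [hf, haet]
          have hM := psi_M hk k (B-1/((t:ℝ)+1)) (B-x) (by linarith) (by linarith)
            (by
              have : (0:ℝ) < 1/((t:ℝ)+1) := by positivity
              linarith)
          have hcx : 0 ≤ cH k * ((B-1/((t:ℝ)+1)) - (B-x)) :=
            mul_nonneg (cH_pos hk).le (by linarith)
          linarith
        · have hxh' : x ≤ 1/((t:ℝ)+1) := not_lt.1 hxh
          have hat : t+1 ≤ a := by
            apply Nat.le_floor
            push_cast
            rw [le_div_iff₀ hx0]
            rw [le_div_iff₀ (by positivity : (0:ℝ) < (t:ℝ)+1)] at hxh'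
            linarith
          have hA1 : (t:ℝ)+1 ≤ (a:ℝ) := by exact_mod_cast hat
          by_cases hBxh : 1/((t:ℝ)+1) < B - x
          · -- recurse on smaller budget
            have hBx0 : 0 < B-x := lt_trans (by positivity) hBxh
            have hfl : ⌊1/(B-x)⌋₊ = t := by
              have low : (t:ℝ) ≤ 1/(B-x) :=
                le_trans (fl_le_inv hB0) (one_div_le_one_div_of_le hBx0 (by linarith))
              have high : 1/(B-x) < (t:ℝ)+1 := by
                rw [div_lt_iff₀ hBx0]
                rw [div_lt_iff₀ (by positivity : (0:ℝ) < (t:ℝ)+1)] at hBxh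
                linarith
              have hub : ⌊1/(B-x)⌋₊ < t+1 := by
                have := (Nat.floor_lt (by positivity : (0:ℝ) ≤ 1/(B-x))).2
                  (by exact_mod_cast high : 1/(B-x) < ((t+1:ℕ):ℝ))
                exact_mod_cast this
              have hlb : t ≤ ⌊1/(B-x)⌋₊ := Nat.le_floor low
              omega
            have hBxk : ¬ (B-x ≤ 1/(k:ℝ)) := by
              push_neg
              calc 1/(k:ℝ) ≤ 1/((t:ℝ)+1) :=
                    one_div_le_one_div_of_le (by positivity) hTk
                _ < B - x := hBxh
            rw [Psi_unfold hk hBx0 (by linarith) hBxk, hfl]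
            have hflb2 : t+1 ≤ ⌊1/(B - 1/((t:ℝ)+1))⌋₊ := by
              apply Nat.le_floor
              have hBp : 0 < B - 1/((t:ℝ)+1) := by linarith
              have hsm : B - 1/((t:ℝ)+1) ≤ 1/((t:ℝ)+1) := by
                have e : 1/(t:ℝ) - 1/((t:ℝ)+1) = 1/((t:ℝ)*((t:ℝ)+1)) := by field_simp; ring
                have e2 : 1/((t:ℝ)*((t:ℝ)+1)) ≤ 1/((t:ℝ)+1) := by
                  apply one_div_le_one_div_of_le (by positivity)
                  nlinarith [show (1:ℝ) ≤ (t:ℝ) from by exact_mod_cast ht1]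
                linarith
              push_cast
              rw [le_div_iff₀ hBp]
              rw [le_div_iff₀ (by positivity : (0:ℝ) < (t:ℝ)+1)] at hsm
              nlinarith
            have hrec := IH (B-1/((t:ℝ)+1)) x hx0 (by linarith) (by
                have : (0:ℝ) < 1/((t:ℝ)+1) := by positivity
                linarith)
              (by omega)
            have e : B - 1/((t:ℝ)+1) - x = B - x - 1/((t:ℝ)+1) := by ring
            rw [e] at hrec
            linarith
          · -- terminal arithmetic case
            have hBxh' : B - x ≤ 1/((t:ℝ)+1) := not_lt.1 hBxh
            have hBx0' : (0:ℝ) ≤ B - x := by linarith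
            have hlow := psi_ge hk k (B-1/((t:ℝ)+1)) (by linarith) (by
              have : (0:ℝ) < 1/((t:ℝ)+1) := by positivity
              linarith)
            rcases eq_or_lt_of_le hBx0' with heq0 | hBx0
            · rw [hf, ← heq0, psi_small _ (by positivity : (0:ℝ) ≤ 1/(k:ℝ))]
              have h1a : 1/(a:ℝ) ≤ 1/(t:ℝ) :=
                one_div_le_one_div_of_le hT0 (by exact_mod_cast hta)
              have : 0 ≤ cH k * (B-1/((t:ℝ)+1)) :=
                mul_nonneg (cH_pos hk).le (by linarith)
              simp only [mul_zero]
              linarith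
            · set s := ⌊1/(B-x)⌋₊ with hs
              have hs1 : t+1 ≤ s := by
                apply Nat.le_floor
                push_cast
                rw [le_div_iff₀ hBx0]
                rw [le_div_iff₀ (by positivity : (0:ℝ) < (t:ℝ)+1)] at hBxh'
                linarith
              have hup := psi_le hk k (B-x) hBx0 (by linarith)
              rw [← hs] at hup
              -- the floor constraint
              have hconN : t*(a+1)+1 ≤ (s+1)*(a+1-t) := by
                have hinv : 1/((s:ℝ)+1) < B - x := inv_fl1_lt hBx0
                have hbd : B - x < 1/(t:ℝ) - 1/((a:ℝ)+1) := by linarith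
                have hcross : (t:ℝ)*((a:ℝ)+1) < ((s:ℝ)+1)*((a:ℝ)+1-(t:ℝ)) := by
                  have e : 1/(t:ℝ) - 1/((a:ℝ)+1) = ((a:ℝ)+1-(t:ℝ))/((t:ℝ)*((a:ℝ)+1)) := by
                    field_simp
                  rw [e] at hbd
                  have := lt_trans hinv hbd
                  rw [div_lt_div_iff₀ (by positivity) (by positivity)] at this
                  linarith
                have hcast : ((a+1-t:ℕ):ℝ) = (a:ℝ)+1-(t:ℝ) := by
                  push_cast [Nat.cast_sub (show t ≤ a+1 by omega)]
                  ring
                have : t*(a+1) < (s+1)*(a+1-t) := by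
                  have h2 : ((t*(a+1):ℕ):ℝ) < (((s+1)*(a+1-t):ℕ):ℝ) := by
                    push_cast [hcast]
                    push_cast at hcross
                    linarith
                  exact_mod_cast h2
                omega
              have hGam : Gam k s ≤ gg k t - gg k a := by
                by_cases hsk : s < k
                · exact le_trans (Gam_le hk (by omega) hsk)
                    (I2core hk ht1 (by omega) hak hs1 hsk hconN)
                · rw [Gam_zero (by omega)]
                  have := gg_mono hk ht1 hta hak
                  linarith
              rw [hf]
              have hcx : cH k * (1/((a:ℝ)+1)) ≤ cH k * x :=
                mul_le_mul_of_nonneg_left hxa.le (cH_pos hk).le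
              have e : 1/(a:ℝ) + cH k*(B-x) + (gg k t - gg k a)
                  = 1/(t:ℝ) + cH k*(B-1/((t:ℝ)+1))
                    + (cH k * (1/((a:ℝ)+1)) - cH k * x) := by
                rw [gg, gg]
                ring
              linarith

lemma tSeq_pos : ∀ n, 1 ≤ tSeq n := by
  intro n
  match n with
  | 0 => exact le_refl 1
  | 1 => exact le_refl 1
  | (n+2) =>
    have := tSeq_pos (n+1)
    simp only [tSeq]
    nlinarith

lemma tSeq_succ {j : ℕ} (hj : 1 ≤ j) : tSeq (j+1) = tSeq j * (tSeq j + 1) := by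
  match j, hj with
  | (n+1), _ => rfl

lemma tSeq_le_succ (n : ℕ) : tSeq n ≤ tSeq (n+1) := by
  match n with
  | 0 => exact le_refl 1
  | (n+1) =>
    conv_rhs => rw [tSeq_succ (show 1 ≤ n+1 by omega)]
    nlinarith [tSeq_pos (n+1)]

lemma tSeq_mono {i j : ℕ} (hij : i ≤ j) : tSeq i ≤ tSeq j := by
  induction j with
  | zero => simp_all
  | succ j IH =>
    rcases Nat.lt_or_ge i (j+1) with h | h
    · exact le_trans (IH (by omega)) (tSeq_le_succ j)
    · have : i = j+1 := by omega
      subst this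
      exact le_refl _

lemma sum_le_psi {k : ℕ} (hk : 2 ≤ k) :
    ∀ (L : List ℝ), (∀ x ∈ L, 0 < x) → ∀ B : ℝ, 0 ≤ B → B ≤ 1 → L.sum ≤ B →
    (L.map (fHarm k)).sum ≤ psiF k k B := by
  intro L
  induction L with
  | nil =>
    intro _ B h0 h1 _
    simp only [List.map_nil, List.sum_nil]
    have h2 := psi_ge hk k B h0 h1
    have h3 : 0 ≤ cH k * B := mul_nonneg (cH_pos hk).le h0
    linarith
  | cons x L IH =>
    intro hpos B h0 h1 hsum
    simp only [List.map_cons, List.sum_cons] at *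
    have hx0 : 0 < x := hpos x (by simp)
    have hLnn : 0 ≤ L.sum :=
      List.sum_nonneg (fun y hy => (hpos y (by simp [hy])).le)
    have hxB : x ≤ B := by linarith
    have hIH := IH (fun y hy => hpos y (by simp [hy])) (B-x)
      (by linarith) (by linarith) (by linarith)
    have hstep := step hk k B x hx0 hxB h1 (by omega)
    linarith

lemma psi_chain {k m : ℕ} (hk : 2 ≤ k) (hm1 : tSeq m < k) (hm2 : k ≤ tSeq (m+1)) :
    ∀ j, 1 ≤ j → j ≤ m+1 → psiF k k (1/(tSeq j : ℝ))
      = (∑ i ∈ Finset.Icc j m, (1:ℝ)/(tSeq i : ℝ)) + (1/(tSeq (m+1):ℝ)) * cH k := by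
  intro j h1 h2
  have hk0 : (0:ℝ) < (k:ℝ) := by positivity
  rcases eq_or_lt_of_le h2 with rfl | hlt
  · -- j = m+1
    have hsm : 1/(tSeq (m+1):ℝ) ≤ 1/(k:ℝ) := by
      apply one_div_le_one_div_of_le hk0
      exact_mod_cast hm2
    rw [psi_small _ hsm, Finset.Icc_eq_empty (by omega), Finset.sum_empty]
    ring
  · -- j ≤ m
    have hjm : j ≤ m := by omega
    have htjk : tSeq j < k := lt_of_le_of_lt (tSeq_mono hjm) hm1
    have htj1 : 1 ≤ tSeq j := tSeq_pos j
    have hT0 : (0:ℝ) < (tSeq j : ℝ) := by exact_mod_cast htj1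
    have hB0 : (0:ℝ) < 1/(tSeq j:ℝ) := by positivity
    have hB1 : 1/(tSeq j:ℝ) ≤ 1 := by
      rw [div_le_iff₀ hT0]
      nlinarith [show (1:ℝ) ≤ (tSeq j:ℝ) from by exact_mod_cast htj1]
    have hBk : ¬ (1/(tSeq j:ℝ) ≤ 1/(k:ℝ)) := by
      push_neg
      apply one_div_lt_one_div_of_lt hT0
      exact_mod_cast htjk
    rw [Psi_unfold hk hB0 hB1 hBk]
    have hfloor : ⌊1/(1/(tSeq j:ℝ))⌋₊ = tSeq j := by
      rw [one_div_one_div]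
      exact Nat.floor_natCast _
    rw [hfloor]
    have hnext : 1/(tSeq j:ℝ) - 1/((tSeq j:ℝ)+1) = 1/(tSeq (j+1):ℝ) := by
      rw [tSeq_succ h1]
      push_cast
      field_simp
      ring
    rw [hnext, psi_chain hk hm1 hm2 (j+1) (by omega) (by omega)]
    have hins : ∑ i ∈ Finset.Icc j m, (1:ℝ)/(tSeq i : ℝ)
        = 1/(tSeq j:ℝ) + ∑ i ∈ Finset.Icc (j+1) m, (1:ℝ)/(tSeq i : ℝ)  := by
      rw [← Finset.Ioc_insert_left hjm, Finset.sum_insert (by simp), Finset.Icc_add_one_left_eq_Ioc]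
    rw [hins]
    ring
termination_by j => m + 1 - j

/-- For every integer `k ≥ 2` and any finite sequence `x_1, …, x_m` of reals in `(0,1]`
with sum at most `1`, the sum of `f_k (x i)` is at most `T_k`. -/
theorem harmonic_weight_sum_le_Tk (k m : ℕ) (hk : 2 ≤ k)
    (hm1 : tSeq m < k) (hm2 : k ≤ tSeq (m + 1))
    (n : ℕ) (x : Fin n → ℝ) (hx : ∀ i, 0 < x i ∧ x i ≤ 1)
    (hsum : (∑ i, x i) ≤ 1) :
    (∑ i, fHarm k (x i)) ≤ TkVal k m := by
  have hm0 : 1 ≤ m := by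
    rcases Nat.eq_zero_or_pos m with rfl | h
    · have h0 : tSeq (0+1) = 1 := rfl
      omega
    · exact h
  -- TkVal = psi at 1
  have hchain := psi_chain hk hm1 hm2 1 (le_refl 1) (by omega)
  have ht1 : ((tSeq 1 : ℕ):ℝ) = 1 := by norm_num [tSeq]
  rw [ht1] at hchain
  rw [show (1:ℝ)/1 = 1 by norm_num] at hchain
  have hTk : psiF k k 1 = TkVal k m := by
    rw [hchain, TkVal, cH]
  rw [← hTk]
  -- list form
  have hL := sum_le_psi hk (List.ofFn x)
    (by
      intro y hy
      rw [List.mem_ofFn] at hy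
      obtain ⟨i, rfl⟩ := hy
      exact (hx i).1)
    1 (by norm_num) (le_refl 1)
    (by rw [List.sum_ofFn]; exact hsum)
  rw [List.map_ofFn, List.sum_ofFn] at hL
  exact hL
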